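/- Let F : ℝ^d → ℝ be differentiable with L_Ω-Lipschitz gradient, let R : ℝ^d → ℝ be lower semicontinuous and convex, P = F + R, and let A ∈ ℝ^{d×d} be symmetric positive definite. For w ∈ ℝ^d define the variable-metric proximal gradient step w̄ = prox_R^{A^{-1}}( w − A ∇F(w) ). Then P(w̄) ≤ P(w) + (w̄ − w)ᵀ( (L_Ω/2) I − A^{-1} )(w̄ − w). -/

import Mathlib

open scoped BigOperators RealInnerProductSpace

/-- `ℝ^d` as Euclidean space. -/
abbrev Euc (d : ℕ) := EuclideanSpace ℝ (Fin d)

/-- Action of a `d × d` real matrix on a vector of `ℝ^d`. -/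
noncomputable def mdot {d : ℕ} (M : Matrix (Fin d) (Fin d) ℝ) (x : Euc d) : Euc d :=
  Matrix.toEuclideanLin M x

/-- The quadratic form `‖x‖_M² = xᵀ M x` associated with a matrix `M`. -/
noncomputable def qf {d : ℕ} (M : Matrix (Fin d) (Fin d) ℝ) (x : Euc d) : ℝ :=
  ⟪x, mdot M x⟫

/-- `u` is a point of the scaled proximal operator `prox_R^M (w)`, i.e. a minimizer of
`y ↦ (1/2)‖y - w‖_M² + R y`, for a real-valued `R`. -/
def IsProxR {d : ℕ} (R : Euc d → ℝ) (M : Matrix (Fin d) (Fin d) ℝ) (w u : Euc d) : Prop :=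
  ∀ y, 2⁻¹ * qf M (u - w) + R u ≤ 2⁻¹ * qf M (y - w) + R y

/- ### Auxiliary lemmas -/

lemma descent_lemma {E : Type*} [NormedAddCommGroup E] [InnerProductSpace ℝ E] [CompleteSpace E]
    (F : E → ℝ) (g : E → E) (hF : ∀ x, HasGradientAt F (g x) x)
    (L : ℝ) (hLip : ∀ x y, ‖g x - g y‖ ≤ L * ‖x - y‖) (x y : E) :
    F y ≤ F x + ⟪g x, y - x⟫ + L / 2 * ‖y - x‖ ^ 2 := by
  set u := y - x with hu
  set ψ : ℝ → ℝ := fun t => F (x + t • u) - t * ⟪g x, u⟫ - t ^ 2 * (L / 2 * ‖u‖ ^ 2) with hψdef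
  have hline : ∀ t : ℝ, HasDerivAt (fun s : ℝ => x + s • u) u t := by
    intro t
    simpa using ((hasDerivAt_id t).smul_const u).const_add x
  have hψ : ∀ t : ℝ, HasDerivAt ψ
      (⟪g (x + t • u), u⟫ - ⟪g x, u⟫ - 2 * t * (L / 2 * ‖u‖ ^ 2)) t := by
    intro t
    have hfd : HasFDerivAt F ((InnerProductSpace.toDual ℝ E) (g (x + t • u))) (x + t • u) :=
      hasGradientAt_iff_hasFDerivAt.mp (hF _)
    have h1 : HasDerivAt (fun s : ℝ => F (x + s • u)) ⟪g (x + t • u), u⟫ t := by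
      have h0 := hfd.comp_hasDerivAt t (hline t)
      simp only [InnerProductSpace.toDual_apply_apply] at h0
      exact h0
    have h2 : HasDerivAt (fun s : ℝ => s * ⟪g x, u⟫) ⟪g x, u⟫ t := by
      simpa using (hasDerivAt_id t).mul_const ⟪g x, u⟫
    have h3 : HasDerivAt (fun s : ℝ => s ^ 2 * (L / 2 * ‖u‖ ^ 2))
        (2 * t * (L / 2 * ‖u‖ ^ 2)) t := by
      simpa using (hasDerivAt_pow 2 t).mul_const (L / 2 * ‖u‖ ^ 2)
    exact (h1.sub h2).sub h3
  have hant : AntitoneOn ψ (Set.Icc (0:ℝ) 1) := by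
    apply antitoneOn_of_deriv_nonpos (convex_Icc 0 1)
    · exact (continuous_iff_continuousAt.mpr fun t => (hψ t).continuousAt).continuousOn
    · intro t _
      exact (hψ t).differentiableAt.differentiableWithinAt
    · intro t ht
      rw [interior_Icc] at ht
      rw [(hψ t).deriv]
      have hb : ⟪g (x + t • u), u⟫ - ⟪g x, u⟫ ≤ L * t * ‖u‖ ^ 2 := by
        rw [← inner_sub_left]
        calc ⟪g (x + t • u) - g x, u⟫ ≤ ‖g (x + t • u) - g x‖ * ‖u‖ := real_inner_le_norm _ _
          _ ≤ (L * ‖(x + t • u) - x‖) * ‖u‖ := by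
              have := hLip (x + t • u) x
              nlinarith [norm_nonneg u]
          _ = L * t * ‖u‖ ^ 2 := by
              rw [add_sub_cancel_left, norm_smul, Real.norm_eq_abs, abs_of_pos ht.1]; ring
      nlinarith
  have := hant (Set.mem_Icc.mpr ⟨le_refl 0, zero_le_one⟩)
    (Set.mem_Icc.mpr ⟨zero_le_one, le_refl 1⟩) zero_le_one
  simp only [hψdef, zero_smul, add_zero, one_smul, zero_mul, sub_zero, one_mul, one_pow,
    zero_pow] at this
  have hxy : x + u = y := by rw [hu]; abel
  rw [hxy] at this
  linarith

lemma mdot_symm {d : ℕ} {M : Matrix (Fin d) (Fin d) ℝ} (hM : M.IsHermitian)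
    (a b : Euc d) : ⟪a, mdot M b⟫ = ⟪mdot M a, b⟫ :=
  ((Matrix.isHermitian_iff_isSymmetric.mp hM) a b).symm

lemma qf_add {d : ℕ} {M : Matrix (Fin d) (Fin d) ℝ} (hM : M.IsHermitian) (a b : Euc d) :
    qf M (a + b) = qf M a + 2 * ⟪a, mdot M b⟫ + qf M b := by
  simp only [qf, mdot, map_add, inner_add_left, inner_add_right]
  have : ⟪b, Matrix.toEuclideanLin M a⟫ = ⟪a, Matrix.toEuclideanLin M b⟫ := by
    rw [show (Matrix.toEuclideanLin M) a = mdot M a from rfl,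
      show (Matrix.toEuclideanLin M) b = mdot M b from rfl, mdot_symm hM a b]
    exact real_inner_comm _ _
  rw [this]; ring

lemma qf_smul {d : ℕ} (M : Matrix (Fin d) (Fin d) ℝ) (t : ℝ) (a : Euc d) :
    qf M (t • a) = t ^ 2 * qf M a := by
  simp only [qf, mdot, map_smul, inner_smul_left, inner_smul_right, RCLike.star_def,
    starRingEnd_apply, star_trivial]
  ring

lemma qf_neg {d : ℕ} (M : Matrix (Fin d) (Fin d) ℝ) (a : Euc d) :
    qf M (-a) = qf M a := by
  simp [qf, mdot]

lemma qf_nonneg {d : ℕ} {M : Matrix (Fin d) (Fin d) ℝ} (hM : M.PosSemidef) (x : Euc d) :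
    0 ≤ qf M x := by
  have := hM.re_dotProduct_nonneg (WithLp.equiv 2 (Fin _ → ℝ) x)
  simpa [qf, mdot, Matrix.toEuclideanLin_apply, EuclideanSpace.inner_eq_star_dotProduct,
    dotProduct, mul_comm] using this

/-- Strong form of the prox inequality, using convexity of `R`. -/
lemma prox_strong {d : ℕ} (R : Euc d → ℝ) (hconv : ConvexOn ℝ Set.univ R)
    {M : Matrix (Fin d) (Fin d) ℝ} (hM : M.PosDef) (v u : Euc d)
    (hprox : IsProxR R M v u) (y : Euc d) :
    2⁻¹ * qf M (u - v) + R u + 2⁻¹ * qf M (y - u) ≤ 2⁻¹ * qf M (y - v) + R y := by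
  set c := qf M (y - u) with hcdef
  have hc : 0 ≤ c := qf_nonneg hM.posSemidef _
  have hqy : qf M (y - v) = qf M (u - v) + 2 * ⟪u - v, mdot M (y - u)⟫ + c := by
    rw [show y - v = (u - v) + (y - u) by abel, qf_add hM.isHermitian]
  have key : ∀ t : ℝ, 0 < t → t ≤ 1 →
      2⁻¹ * qf M (u - v) + R u + (1 - t) * (2⁻¹ * c) ≤ 2⁻¹ * qf M (y - v) + R y := by
    intro t ht0 ht1
    have hpt := hprox (u + t • (y - u))
    have hq : qf M (u + t • (y - u) - v)
        = qf M (u - v) + 2 * (t * ⟪u - v, mdot M (y - u)⟫) + t ^ 2 * c := by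
      rw [show u + t • (y - u) - v = (u - v) + t • (y - u) by abel, qf_add hM.isHermitian,
        qf_smul]
      congr 2
      rw [mdot, map_smul, real_inner_smul_right]
      rfl
    have hR : R (u + t • (y - u)) ≤ (1 - t) * R u + t * R y := by
      have h2 := hconv.2 (Set.mem_univ u) (Set.mem_univ y)
        (by linarith : (0:ℝ) ≤ 1 - t) (le_of_lt ht0) (by ring)
      have heq : (1 - t) • u + t • y = u + t • (y - u) := by
        rw [sub_smul, smul_sub, one_smul]; abel
      rw [heq] at h2
      simpa [smul_eq_mul] using h2
    rw [hqy]
    rw [hq] at hpt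
    nlinarith [hpt, hR, ht0, mul_pos ht0 ht0]
  by_contra hlt
  push_neg at hlt
  have hδ : 0 < (2⁻¹ * qf M (u - v) + R u + 2⁻¹ * c) - (2⁻¹ * qf M (y - v) + R y) := by
    linarith
  set δ := (2⁻¹ * qf M (u - v) + R u + 2⁻¹ * c) - (2⁻¹ * qf M (y - v) + R y) with hδdef
  rcases eq_or_lt_of_le hc with h0 | hcpos
  · have := key 1 one_pos le_rfl
    simp at this
    linarith [h0]
  · have ht0 : 0 < min 1 (δ / c) := lt_min one_pos (div_pos hδ hcpos)
    have := key (min 1 (δ / c)) ht0 (min_le_left _ _)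
    have htc : min 1 (δ / c) * c ≤ δ := by
      calc min 1 (δ / c) * c ≤ (δ / c) * c := mul_le_mul_of_nonneg_right (min_le_right _ _) hc
        _ = δ := div_mul_cancel₀ _ hcpos.ne'
    linarith

/-- for `F` differentiable with `L_Ω`-Lipschitz gradient, `R` lsc convex,
`P = F + R`, `A` symmetric positive definite and `w̄ = prox_R^{A⁻¹}(w − A∇F(w))`:
`P(w̄) ≤ P(w) + (w̄ − w)ᵀ((L_Ω/2)I − A⁻¹)(w̄ − w)`. -/
theorem vm_prox_gradient_descent {d : ℕ} (F : Euc d → ℝ) (gF : Euc d → Euc d)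
    (hF : ∀ x, HasGradientAt F (gF x) x)
    (LΩ : ℝ) (hLip : ∀ x y, ‖gF x - gF y‖ ≤ LΩ * ‖x - y‖)
    (R : Euc d → ℝ) (hlsc : LowerSemicontinuous R) (hconv : ConvexOn ℝ Set.univ R)
    (A : Matrix (Fin d) (Fin d) ℝ) (hA : A.PosDef) (w wbar : Euc d)
    (hprox : IsProxR R A⁻¹ (w - mdot A (gF w)) wbar) :
    F wbar + R wbar ≤ F w + R w
      + qf ((LΩ / 2) • (1 : Matrix (Fin d) (Fin d) ℝ) - A⁻¹) (wbar - w) := by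
  have hAinv : (A⁻¹).PosDef := hA.inv
  set g : Euc d := gF w with hg
  set x : Euc d := wbar - w with hx
  set v : Euc d := w - mdot A g with hv
  -- A⁻¹ applied to A g is g
  have hcancel : mdot A⁻¹ (mdot A g) = g := by
    have hdet : IsUnit A.det := isUnit_iff_ne_zero.mpr hA.det_pos.ne'
    simp only [mdot, Matrix.toEuclideanLin_apply]
    simp [Matrix.mulVec_mulVec, Matrix.nonsing_inv_mul A hdet]
  -- strong prox inequality at y = w
  have h1 := prox_strong R hconv hAinv v wbar hprox w
  have hwv : w - v = mdot A g := by rw [hv]; abel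
  have hwbv : wbar - v = x + mdot A g := by rw [hv, hx]; abel
  have hq1 : qf A⁻¹ (wbar - v) = qf A⁻¹ x + 2 * ⟪x, g⟫ + qf A⁻¹ (mdot A g) := by
    rw [hwbv, qf_add hAinv.isHermitian, hcancel]
  have hq2 : qf A⁻¹ (w - wbar) = qf A⁻¹ x := by
    rw [show w - wbar = -x by rw [hx]; abel, qf_neg]
  rw [hq1, hq2, hwv] at h1
  -- descent lemma
  have h2 := descent_lemma F gF hF LΩ hLip w wbar
  rw [← hx, ← hg] at h2
  have hgx : ⟪g, x⟫ = ⟪x, g⟫ := real_inner_comm _ _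
  -- compute the RHS quadratic form
  have h3 : qf ((LΩ / 2) • (1 : Matrix (Fin d) (Fin d) ℝ) - A⁻¹) x
      = LΩ / 2 * ‖x‖ ^ 2 - qf A⁻¹ x := by
    have hm : mdot ((LΩ / 2) • (1 : Matrix (Fin d) (Fin d) ℝ) - A⁻¹) x
        = (LΩ / 2) • x - mdot A⁻¹ x := by
      simp only [mdot, map_sub, map_smul, LinearMap.sub_apply, LinearMap.smul_apply]
      congr 1
      simp [Matrix.toEuclideanLin_apply, Matrix.one_mulVec]
    rw [qf, hm, inner_sub_right, real_inner_smul_right, real_inner_self_eq_norm_sq]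
    rfl
  rw [h3]
  linarith [h1, h2, hgx]
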